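/- Let L/K be a Galois field extension. The restriction homomorphisms Gal(L/K) → Gal(F/K), where F ranges over the intermediate fields of L/K that are finite Galois extensions of K, induce an isomorphism of topological groups from Gal(L/K), equipped with the Krull topology, onto the inverse limit of the system of finite discrete groups Gal(F/K) with transition maps given by restriction. -/

import Mathlib

/-- The index set for the inverse limit: intermediate fields of `L/K` that are finite
Galois extensions of `K`. -/
def FinGalIdx (K L : Type*) [Field K] [Field L] [Algebra K L] :=
  {F : IntermediateField K L // FiniteDimensional K F ∧ IsGalois K F}

/-- The restriction homomorphism `Gal(L/K) →* Gal(F/K)` for a finite Galois intermediate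
field `F`. -/
noncomputable def galRes (K L : Type*) [Field K] [Field L] [Algebra K L]
    (F : FinGalIdx K L) : (L ≃ₐ[K] L) →* (F.1 ≃ₐ[K] F.1) :=
  haveI : IsGalois K F.1 := F.2.2
  AlgEquiv.restrictNormalHom F.1

/-- The inverse limit of the finite Galois groups `Gal(F/K)`: the subgroup of the product
`∏ F, Gal(F/K)` consisting of the families compatible with the restriction maps
`Gal(F'/K) → Gal(F/K)` for `F ⊆ F'`. -/
def galLimit (K L : Type*) [Field K] [Field L] [Algebra K L] :
    Subgroup (∀ F : FinGalIdx K L, (F.1 ≃ₐ[K] F.1)) where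
  carrier := {x | ∀ (F F' : FinGalIdx K L) (h : F.1 ≤ F'.1) (a : F.1),
      ((x F') ⟨(a : L), h a.2⟩ : L) = ((x F) a : L)}
  one_mem' := by intro F F' h a; rfl
  mul_mem' := by
    intro x y hx hy F F' h a
    have h1 : y F' ⟨(a : L), h a.2⟩ = ⟨((y F) a : L), h ((y F) a).2⟩ :=
      Subtype.ext (hy F F' h a)
    show ((x F') ((y F') ⟨(a : L), h a.2⟩) : L) = ((x F) ((y F) a) : L)
    rw [h1]
    exact hx F F' h ((y F) a)
  inv_mem' := by
    intro x hx F F' h a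
    have key : x F' ⟨(((x F)⁻¹ a : F.1) : L), h ((x F)⁻¹ a).2⟩ = ⟨(a : L), h a.2⟩ := by
      apply Subtype.ext
      have h2 := hx F F' h ((x F)⁻¹ a)
      have h3 : (x F) ((x F)⁻¹ a) = a := (x F).apply_symm_apply a
      rw [h3] at h2
      exact h2
    have key2 : (x F')⁻¹ ⟨(a : L), h a.2⟩ = ⟨(((x F)⁻¹ a : F.1) : L), h ((x F)⁻¹ a).2⟩ := by
      rw [← key]
      exact (x F').symm_apply_apply _
    show ((x F')⁻¹ ⟨(a : L), h a.2⟩ : L) = (((x F)⁻¹ a : F.1) : L)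
    rw [key2]


section Aux

variable {K L : Type*} [Field K] [Field L] [Algebra K L]

/-- Every element of an algebraic Galois extension lies in a finite Galois
intermediate field. -/
lemma exists_finGal [Algebra.IsAlgebraic K L]
    (hfixed : IntermediateField.fixedField (⊤ : Subgroup (L ≃ₐ[K] L)) = ⊥) (x : L) :
    ∃ F : IntermediateField K L, FiniteDimensional K F ∧ IsGalois K F ∧ x ∈ F := by
  have hint : IsIntegral K x := (Algebra.IsAlgebraic.isAlgebraic (R := K) x).isIntegral
  set O : Set L := Set.range (fun σ : L ≃ₐ[K] L => σ x) with hO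
  have hroot : ∀ σ : L ≃ₐ[K] L, Polynomial.aeval (σ x) (minpoly K x) = 0 := by
    intro σ
    have h := Polynomial.aeval_algHom_apply σ.toAlgHom x (minpoly K x)
    rw [minpoly.aeval, map_zero] at h
    exact h
  have hOfin : O.Finite := by
    apply Set.Finite.subset ((minpoly K x).rootSet_finite L)
    rintro y ⟨σ, rfl⟩
    rw [Polynomial.mem_rootSet]
    exact ⟨minpoly.ne_zero hint, hroot σ⟩
  haveI : Finite O := hOfin.to_subtype
  set E : IntermediateField K L := IntermediateField.adjoin K O with hE
  haveI hfd : FiniteDimensional K E :=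
    IntermediateField.finiteDimensional_adjoin fun z _ => (Algebra.IsAlgebraic.isAlgebraic (R := K) z).isIntegral
  have hxE : x ∈ E := IntermediateField.subset_adjoin K O ⟨1, rfl⟩
  have himg : ∀ σ : L ≃ₐ[K] L, σ '' O = O := by
    intro σ
    ext y
    constructor
    · rintro ⟨z, ⟨τ, rfl⟩, rfl⟩
      exact ⟨σ * τ, rfl⟩
    · rintro ⟨τ, rfl⟩
      exact ⟨(σ⁻¹ * τ) x, ⟨σ⁻¹ * τ, rfl⟩, by show (σ * (σ⁻¹ * τ)) x = τ x; rw [← mul_assoc, mul_inv_cancel, one_mul]⟩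
  have hstab : ∀ σ : L ≃ₐ[K] L, E.map σ.toAlgHom = E := by
    intro σ
    rw [hE, IntermediateField.adjoin_map]
    congr 1
    exact himg σ
  haveI hgal : IsGalois K E := by
    apply IsGalois.of_fixedField_eq_bot
    apply le_antisymm _ bot_le
    intro y hy
    have hyfix : ∀ σ : L ≃ₐ[K] L, σ (y : L) = (y : L) := by
      intro σ
      let σ' : E ≃ₐ[K] E :=
        (IntermediateField.intermediateFieldMap σ E).trans
          (IntermediateField.equivOfEq (hstab σ))
      have h1 : (σ' y : L) = σ (y : L) := by
        exact IntermediateField.intermediateFieldMap_apply_coe σ E y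
      have h2 : σ' y = y := hy ⟨σ', Subgroup.mem_top σ'⟩
      rw [h2] at h1
      exact h1.symm
    have : (y : L) ∈ IntermediateField.fixedField (⊤ : Subgroup (L ≃ₐ[K] L)) := by
      rintro ⟨σ, -⟩
      exact hyfix σ
    rw [hfixed, IntermediateField.mem_bot] at this
    obtain ⟨c, hc⟩ := this
    rw [IntermediateField.mem_bot]
    exact ⟨c, Subtype.ext (by rw [← hc]; rfl)⟩
  exact ⟨E, hfd, hgal, hxE⟩

lemma isGalois_of_fixed [Algebra.IsAlgebraic K L]
    (hfixed : IntermediateField.fixedField (⊤ : Subgroup (L ≃ₐ[K] L)) = ⊥) :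
    IsGalois K L := by
  have key : ∀ x : L, Polynomial.Separable (minpoly K x) ∧
      ((minpoly K x).map (algebraMap K L)).Splits := by
    intro x
    obtain ⟨F, hfd, hgal, hxF⟩ := exists_finGal hfixed x
    have hmin : minpoly K (algebraMap F L ⟨x, hxF⟩) = minpoly K (⟨x, hxF⟩ : F) :=
      minpoly.algebraMap_eq (algebraMap F L).injective ⟨x, hxF⟩
    have hx : algebraMap F L ⟨x, hxF⟩ = x := rfl
    rw [hx] at hmin
    constructor
    · rw [hmin]
      exact Algebra.IsSeparable.isSeparable K (⟨x, hxF⟩ : F)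
    · rw [hmin, IsScalarTower.algebraMap_eq K F L, ← Polynomial.map_map]
      exact (IsGalois.splits (F := K) (⟨x, hxF⟩ : F)).map _
  haveI hsep : Algebra.IsSeparable K L := ⟨fun x => (key x).1⟩
  haveI hnor : Normal K L := normal_iff.mpr fun x =>
    ⟨((Algebra.IsAlgebraic.isAlgebraic (R := K) x).isIntegral), (key x).2⟩
  exact ⟨⟩

end Aux


section Main

variable {K L : Type*} [Field K] [Field L] [Algebra K L]

lemma galRes_coe (F : FinGalIdx K L) (σ : L ≃ₐ[K] L) (a : F.1) :
    ((galRes K L F σ) a : L) = σ a := by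
  haveI : IsGalois K F.1 := F.2.2
  exact AlgEquiv.restrictNormal_commutes σ F.1 a

lemma galRes_continuous (F : FinGalIdx K L) : Continuous (galRes K L F) := by
  haveI : FiniteDimensional K F.1 := F.2.1
  apply continuous_of_continuousAt_one
  rw [ContinuousAt, map_one, Filter.tendsto_def]
  intro s hs
  apply Filter.mem_of_superset (F.1.fixingSubgroup_isOpen.mem_nhds (one_mem _))
  intro σ hσ
  have h1 : galRes K L F σ = 1 := by
    apply AlgEquiv.ext; intro a; apply Subtype.ext
    rw [galRes_coe]
    exact ((IntermediateField.mem_fixingSubgroup_iff F.1 σ).mp hσ) a a.2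
  show galRes K L F σ ∈ s
  rw [h1]
  exact mem_of_mem_nhds hs

variable [Algebra.IsAlgebraic K L] [IsGalois K L]

noncomputable def idxOf (x : L) : FinGalIdx K L :=
  ⟨(FiniteGaloisIntermediateField.adjoin K ({x} : Set L)).toIntermediateField,
    inferInstance, inferInstance⟩

lemma mem_idxOf (x : L) : x ∈ (idxOf (K := K) x).1 :=
  FiniteGaloisIntermediateField.subset_adjoin (k := K) (K := L) {x} rfl

lemma idxOf_le {x : L} {F : FinGalIdx K L} (h : x ∈ F.1) : (idxOf x).1 ≤ F.1 := by
  haveI := F.2.1; haveI := F.2.2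
  exact (FiniteGaloisIntermediateField.adjoin_simple_le_iff
    (L := FiniteGaloisIntermediateField.mk F.1)).mpr h

noncomputable def supIdx (F F' : FinGalIdx K L) : FinGalIdx K L :=
  ⟨F.1 ⊔ F'.1, by
    haveI := F.2.1; haveI := F'.2.1; haveI := F.2.2; haveI := F'.2.2
    exact ⟨IntermediateField.finiteDimensional_sup F.1 F'.1, inferInstance⟩⟩

noncomputable def galPhi : (L ≃ₐ[K] L) →* galLimit K L where
  toFun σ := ⟨fun F => galRes K L F σ, fun F F' h a => by rw [galRes_coe, galRes_coe]⟩
  map_one' := Subtype.ext (funext fun F => map_one (galRes K L F))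
  map_mul' σ τ := Subtype.ext (funext fun F => map_mul (galRes K L F) σ τ)

lemma galPhi_injective : Function.Injective (galPhi (K := K) (L := L)) := by
  intro σ τ h
  ext x
  have h1 := congrFun (Subtype.ext_iff.mp h) (idxOf x)
  show σ x = τ x
  rw [← galRes_coe (idxOf x) σ ⟨x, mem_idxOf x⟩, ← galRes_coe (idxOf x) τ ⟨x, mem_idxOf x⟩]
  show ((galPhi σ).1 (idxOf x) ⟨x, mem_idxOf x⟩ : L) = ((galPhi τ).1 (idxOf x) ⟨x, mem_idxOf x⟩ : L)
  rw [h1]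

lemma galPhi_surjective : Function.Surjective (galPhi (K := K) (L := L)) := by
  classical
  rintro ⟨x, hx⟩
  let g : L → L := fun l => (x (idxOf l) ⟨l, mem_idxOf l⟩ : L)
  have hg : ∀ (F : FinGalIdx K L) (l : L) (hl : l ∈ F.1), g l = (x F ⟨l, hl⟩ : L) :=
    fun F l hl => (hx (idxOf l) F (idxOf_le hl) ⟨l, mem_idxOf l⟩).symm
  let ghom : L →ₐ[K] L :=
  { toFun := g
    map_one' := by
      show (x (idxOf 1) ⟨1, mem_idxOf 1⟩ : L) = 1
      have h1 : (⟨1, mem_idxOf 1⟩ : (idxOf (K := K) (1:L)).1) = 1 := rfl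
      rw [h1, map_one, OneMemClass.coe_one]
    map_mul' := fun a b => by
      have ha : a ∈ (supIdx (K := K) (idxOf a) (idxOf b)).1 :=
        (le_sup_left : (idxOf a).1 ≤ _) (mem_idxOf a)
      have hb : b ∈ (supIdx (K := K) (idxOf a) (idxOf b)).1 :=
        (le_sup_right : (idxOf b).1 ≤ _) (mem_idxOf b)
      show g (a*b) = g a * g b
      rw [hg _ a ha, hg _ b hb, hg _ (a*b) (mul_mem ha hb)]
      have h1 : (⟨a*b, mul_mem ha hb⟩ : (supIdx (K := K) (idxOf a) (idxOf b)).1) = ⟨a, ha⟩ * ⟨b, hb⟩ := rfl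
      rw [h1, map_mul]
      rfl
    map_zero' := by
      show (x (idxOf 0) ⟨0, mem_idxOf 0⟩ : L) = 0
      have h1 : (⟨0, mem_idxOf 0⟩ : (idxOf (K := K) (0:L)).1) = 0 := rfl
      rw [h1, map_zero, ZeroMemClass.coe_zero]
    map_add' := fun a b => by
      have ha : a ∈ (supIdx (K := K) (idxOf a) (idxOf b)).1 :=
        (le_sup_left : (idxOf a).1 ≤ _) (mem_idxOf a)
      have hb : b ∈ (supIdx (K := K) (idxOf a) (idxOf b)).1 :=
        (le_sup_right : (idxOf b).1 ≤ _) (mem_idxOf b)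
      show g (a+b) = g a + g b
      rw [hg _ a ha, hg _ b hb, hg _ (a+b) (add_mem ha hb)]
      have h1 : (⟨a+b, add_mem ha hb⟩ : (supIdx (K := K) (idxOf a) (idxOf b)).1) = ⟨a, ha⟩ + ⟨b, hb⟩ := rfl
      rw [h1, map_add]
      rfl
    commutes' := fun c => by
      show (x (idxOf _) ⟨algebraMap K L c, mem_idxOf _⟩ : L) = algebraMap K L c
      have h1 : (⟨algebraMap K L c, mem_idxOf _⟩ : (idxOf (K := K) (algebraMap K L c)).1) =
          algebraMap K (idxOf (K := K) (algebraMap K L c)).1 c :=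
        Subtype.ext (IsScalarTower.algebraMap_apply K ((idxOf (K := K) (algebraMap K L c)).1) L c)
      rw [h1, AlgEquiv.commutes]
      rfl }
  have hinj : Function.Injective ghom := ghom.toRingHom.injective
  have hsurj : Function.Surjective ghom := by
    intro l
    have hm : (((x (idxOf l)).symm ⟨l, mem_idxOf l⟩ : (idxOf l).1) : L) ∈ (idxOf l).1 :=
      ((x (idxOf l)).symm ⟨l, mem_idxOf l⟩).2
    refine ⟨(((x (idxOf l)).symm ⟨l, mem_idxOf l⟩ : (idxOf l).1) : L), ?_⟩
    show g _ = l
    rw [hg (idxOf l) _ hm]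
    have h1 : (⟨_, hm⟩ : (idxOf (K := K) l).1) = (x (idxOf l)).symm ⟨l, mem_idxOf l⟩ := rfl
    rw [h1, AlgEquiv.apply_symm_apply]
  refine ⟨AlgEquiv.ofBijective ghom ⟨hinj, hsurj⟩, ?_⟩
  apply Subtype.ext
  funext F
  apply AlgEquiv.ext
  intro a
  apply Subtype.ext
  show ((galRes K L F (AlgEquiv.ofBijective ghom ⟨hinj, hsurj⟩)) a : L) = (x F a : L)
  rw [galRes_coe]
  show g (a : L) = (x F a : L)
  rw [hg F a a.2]

lemma exists_finGalIdx_ge (E : IntermediateField K L) [FiniteDimensional K E] :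
    ∃ F : FinGalIdx K L, E ≤ F.1 := by
  classical
  let b := Module.finBasis K E
  let s : Set L := Set.range (fun i => ((b i : E) : L))
  haveI : Finite s := (Set.finite_range _).to_subtype
  refine ⟨⟨(FiniteGaloisIntermediateField.adjoin K s).toIntermediateField,
    inferInstance, inferInstance⟩, ?_⟩
  have h1 : s ⊆ (FiniteGaloisIntermediateField.adjoin K s).toIntermediateField :=
    FiniteGaloisIntermediateField.subset_adjoin K s
  intro l hl
  have h0 := congrArg E.val.toLinearMap (b.sum_repr ⟨l, hl⟩)
  rw [map_sum] at h0
  simp only [map_smul] at h0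
  have h2 : l = ∑ i, b.repr ⟨l, hl⟩ i • ((b i : E) : L) := h0.symm
  rw [h2]
  refine sum_mem fun i _ => ?_
  rw [Algebra.smul_def]
  exact mul_mem (IntermediateField.algebraMap_mem _ _) (h1 ⟨i, rfl⟩)

end Main

/-- For a Galois extension `L/K` (an algebraic extension such that the fixed field of the
automorphism group is exactly `K`), the restriction homomorphisms to the finite Galois
subextensions induce an isomorphism of topological groups from `Gal(L/K)`, with the Krull
topology, onto the inverse limit of the finite (discrete) groups `Gal(F/K)`. -/
theorem galoisGroup_isomorphic_to_invLimit_of_finite_galois_groups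
    (K L : Type*) [Field K] [Field L] [Algebra K L] [Algebra.IsAlgebraic K L]
    (hfixed : IntermediateField.fixedField (⊤ : Subgroup (L ≃ₐ[K] L)) = ⊥) :
    ∃ e : (L ≃ₐ[K] L) ≃* galLimit K L,
      Continuous e ∧ Continuous e.symm ∧
      ∀ (σ : L ≃ₐ[K] L) (F : FinGalIdx K L), (e σ).1 F = galRes K L F σ := by
  haveI : IsGalois K L := isGalois_of_fixed hfixed
  refine ⟨MulEquiv.ofBijective galPhi ⟨galPhi_injective, galPhi_surjective⟩, ?_, ?_, fun σ F => rfl⟩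
  · show Continuous (galPhi (K := K) (L := L))
    apply Continuous.subtype_mk
    exact continuous_pi fun F => galRes_continuous F
  · set e := MulEquiv.ofBijective (galPhi (K := K) (L := L)) ⟨galPhi_injective, galPhi_surjective⟩
    apply continuous_of_continuousAt_one e.symm
    rw [ContinuousAt, map_one, Filter.tendsto_def]
    intro s hs
    rw [krullTopology_mem_nhds_one_iff] at hs
    obtain ⟨E, hfdE, hEs⟩ := hs
    haveI : FiniteDimensional K E := hfdE
    obtain ⟨F, hEF⟩ := exists_finGalIdx_ge E
    haveI : FiniteDimensional K F.1 := F.2.1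
    have h1open : IsOpen ({1} : Set (F.1 ≃ₐ[K] F.1)) := by
      have h := IntermediateField.fixingSubgroup_isOpen (⊤ : IntermediateField K F.1)
      rwa [IntermediateField.fixingSubgroup_top, Subgroup.coe_bot] at h
    have hco : Continuous (fun y : galLimit K L => y.1 F) :=
      (continuous_apply F).comp continuous_subtype_val
    have hopen : IsOpen ((fun y : galLimit K L => y.1 F) ⁻¹' {1}) :=
      hco.isOpen_preimage _ h1open
    apply Filter.mem_of_superset (hopen.mem_nhds (by
      show (1 : galLimit K L).1 F ∈ ({1} : Set _)
      rfl))
    intro y hy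
    have hy1 : y.1 F = 1 := hy
    rw [Set.mem_preimage]
    apply hEs
    rw [SetLike.mem_coe, IntermediateField.mem_fixingSubgroup_iff]
    intro l hl
    have hlF : l ∈ F.1 := hEF hl
    have h2 : galRes K L F (e.symm y) = 1 := by
      have h3 : (galPhi (e.symm y)).1 F = y.1 F :=
        congrFun (Subtype.ext_iff.mp (e.apply_symm_apply y)) F
      rw [hy1] at h3
      exact h3
    rw [← galRes_coe F (e.symm y) ⟨l, hlF⟩, h2]
    rfl
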